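/- Assume in addition that σ_n = T almost surely for every n ∈ ℕ, and that for some p ≥ 1 one has sup_{n ∈ ℕ} 𝔼[ sup_{t ∈ [0,T]} ‖X_n(t)‖^p ] < ∞. Then σ_∞ = T almost surely. -/

import Mathlib

open MeasureTheory Filter Set

-- helper: bounded sup of norms over Icc for continuous-on functions
lemma aux_bdd {E : Type*} [NormedAddCommGroup E] {a b : ℝ} {f : ℝ → E}
    (hf : ContinuousOn f (Set.Icc a b)) :
    BddAbove (Set.range fun t : Set.Icc a b => ‖f t‖) := by
  have h1 : (Set.range fun t : Set.Icc a b => ‖f t‖) = (fun x => ‖f x‖) '' Set.Icc a b :=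
    (Set.image_eq_range (fun x => ‖f x‖) (Set.Icc a b)).symm
  rw [h1]
  exact (isCompact_Icc.image_of_continuousOn hf.norm).bddAbove

-- helper: clamped rationals approximate any point of Icc 0 T
lemma aux_dense (e : ℕ → ℚ) (he : Function.Surjective e)
    (T : ℝ) (t : ℝ) (ht : t ∈ Set.Icc 0 T) :
    ∃ u : ℕ → ℕ, Tendsto (fun k => max 0 (min T ((e (u k) : ℚ) : ℝ)))
      atTop (nhds t) := by
  have hq : ∀ k : ℕ, ∃ q : ℚ, t - 1 / (k + 1) < (q : ℝ) ∧ (q : ℝ) < t + 1 / (k + 1) := by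
    intro k
    refine exists_rat_btwn ?_
    have : (0:ℝ) < 1 / (k+1) := by positivity
    linarith
  choose q hq1 hq2 using hq
  choose u hu using fun k => he (q k)
  refine ⟨u, ?_⟩
  have hqt : Tendsto (fun k : ℕ => ((q k : ℝ))) atTop (nhds t) := by
    have h1 : Tendsto (fun k : ℕ => t - 1 / (k + 1)) atTop (nhds t) := by
      have := tendsto_const_nhds (x := t) (f := atTop (α := ℕ)) |>.sub
        tendsto_one_div_add_atTop_nhds_zero_nat
      simpa using this
    have h2 : Tendsto (fun k : ℕ => t + 1 / (k + 1)) atTop (nhds t) := by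
      have := tendsto_const_nhds (x := t) (f := atTop (α := ℕ)) |>.add
        tendsto_one_div_add_atTop_nhds_zero_nat
      simpa using this
    exact tendsto_of_tendsto_of_tendsto_of_le_of_le h1 h2
      (fun k => (hq1 k).le) (fun k => (hq2 k).le)
  have hc : Continuous fun x : ℝ => max 0 (min T x) :=
    continuous_const.max (continuous_const.min continuous_id)
  have hclamp : max 0 (min T t) = t := by
    rw [min_eq_right ht.2, max_eq_right ht.1]
  have h2 := (hc.tendsto t).comp hqt
  rw [hclamp] at h2
  exact h2.congr fun k => by simp [Function.comp, hu]


theorem stmt_8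
    {Ω : Type*} [MeasurableSpace Ω] (P : Measure Ω) [IsProbabilityMeasure P]
    {E : Type*} [NormedAddCommGroup E] [NormedSpace ℝ E] [CompleteSpace E]
    [MeasurableSpace E] [BorelSpace E]
    (T : ℝ) (hT : 0 < T)
    -- the explosion times σ_n (n ∈ ℕ) and σ_∞
    (σ : ℕ → Ω → ℝ) (σi : Ω → ℝ)
    (hσmeas : ∀ n, Measurable (σ n)) (hσimeas : Measurable σi)
    (hσmem : ∀ n ω, σ n ω ∈ Set.Ioc 0 T) (hσimem : ∀ ω, σi ω ∈ Set.Ioc 0 T)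
    -- the processes X_n (n ∈ ℕ) and X_∞, jointly measurable
    (X : ℕ → ℝ → Ω → E) (Xi : ℝ → Ω → E)
    (hXmeas : ∀ n, Measurable fun p : ℝ × Ω => X n p.1 p.2)
    (hXimeas : Measurable fun p : ℝ × Ω => Xi p.1 p.2)
    -- path continuity on [0, σ_n(ω)), and on [0,T] if σ_n(ω) = T
    (hXcont : ∀ n ω, ContinuousOn (fun t => X n t ω) (Set.Ico 0 (σ n ω)))
    (hXcontT : ∀ n ω, σ n ω = T → ContinuousOn (fun t => X n t ω) (Set.Icc 0 T))
    (hXicont : ∀ ω, ContinuousOn (fun t => Xi t ω) (Set.Ico 0 (σi ω)))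
    (hXicontT : ∀ ω, σi ω = T → ContinuousOn (fun t => Xi t ω) (Set.Icc 0 T))
    -- σ_n is an explosion time: on {σ_n < T}, limsup_{t ↑ σ_n} ‖X_n(t)‖ = ∞
    (hexpl : ∀ n ω, σ n ω < T →
      ∀ M : ℝ, ∃ᶠ t in nhdsWithin (σ n ω) (Set.Iio (σ n ω)), M < ‖X n t ω‖)
    (hexpli : ∀ ω, σi ω < T →
      ∀ M : ℝ, ∃ᶠ t in nhdsWithin (σi ω) (Set.Iio (σi ω)), M < ‖Xi t ω‖)
    -- the stopping times ρ_n^{(r)} = inf { t ∈ (0, σ_n) : ‖X_n(t)‖ > r }, inf ∅ := T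
    (ρ : ℕ → ℝ → Ω → ℝ) (ρi : ℝ → Ω → ℝ)
    (hρ : ∀ n r ω, ρ n r ω = sInf ({t : ℝ | t ∈ Set.Ioo 0 (σ n ω) ∧ r < ‖X n t ω‖} ∪ {T}))
    (hρi : ∀ r ω, ρi r ω = sInf ({t : ℝ | t ∈ Set.Ioo 0 (σi ω) ∧ r < ‖Xi t ω‖} ∪ {T}))
    -- the globally defined processes X_n^{(r)} (denoted Y n r) and X_∞^{(r)} (denoted Yi r)
    (Y : ℕ → ℝ → ℝ → Ω → E) (Yi : ℝ → ℝ → Ω → E)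
    (hYmeas : ∀ n r, Measurable fun p : ℝ × Ω => Y n r p.1 p.2)
    (hYimeas : ∀ r, Measurable fun p : ℝ × Ω => Yi r p.1 p.2)
    (hYcont : ∀ n r ω, Continuous fun t => Y n r t ω)
    (hYicont : ∀ r ω, Continuous fun t => Yi r t ω)
    -- assumption (a)
    (ha : ∀ n r, 0 < r → ∀ᵐ ω ∂P, ∀ t ∈ Set.Icc 0 (ρ n r ω), Y n r t ω = X n t ω)
    (hai : ∀ r, 0 < r → ∀ᵐ ω ∂P, ∀ t ∈ Set.Icc 0 (ρi r ω), Yi r t ω = Xi t ω)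
    -- assumption (b): X_n^{(r)} → X_∞^{(r)} in L⁰(Ω; C([0,T]; E))
    (hb : ∀ r, 0 < r → TendstoInMeasure P
      (fun n ω => ⨆ t : Set.Icc (0:ℝ) T, ‖Y n r (t : ℝ) ω - Yi r (t : ℝ) ω‖)
      atTop (fun _ => (0 : ℝ)))
    -- additionally: σ_n = T almost surely for all n ∈ ℕ
    (hσT : ∀ n, ∀ᵐ ω ∂P, σ n ω = T)
    -- and sup_n 𝔼[ sup_t ‖X_n(t)‖^p ] < ∞ for some p ≥ 1
    (p : ℝ) (hp : 1 ≤ p) (C : ENNReal) (hC : C < ⊤)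
    (hbdd : ∀ n : ℕ,
      ∫⁻ ω, ENNReal.ofReal ((⨆ t : Set.Icc (0:ℝ) T, ‖X n (t : ℝ) ω‖) ^ p) ∂P ≤ C) :
    ∀ᵐ ω ∂P, σi ω = T := by
  classical
  obtain ⟨e, he⟩ := exists_surjective_nat ℚ
  set d : ℕ → ℝ := fun i => max 0 (min T ((e i : ℚ) : ℝ)) with hd
  have hdmem : ∀ i, d i ∈ Set.Icc 0 T :=
    fun i => ⟨le_max_left _ _, max_le hT.le (min_le_left _ _)⟩
  have hIccne : (Set.Icc (0:ℝ) T).Nonempty := Set.nonempty_Icc.2 hT.le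
  haveI : Nonempty (Set.Icc (0:ℝ) T) := hIccne.to_subtype
  have hp0 : (0:ℝ) ≤ p := zero_le_one.trans hp
  -- density of the points d i in [0,T] for continuous paths
  have hdense : ∀ (f : ℝ → E), ContinuousOn f (Set.Icc 0 T) → ∀ c : ℝ,
      (∀ i, ‖f (d i)‖ ≤ c) → ∀ t ∈ Set.Icc 0 T, ‖f t‖ ≤ c := by
    intro f hf c hc t ht
    obtain ⟨u, hu⟩ := aux_dense e he T t ht
    have hw : Tendsto (fun k => d (u k)) atTop (nhdsWithin t (Set.Icc 0 T)) :=
      tendsto_nhdsWithin_of_tendsto_nhds_of_eventually_within _ hu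
        (Eventually.of_forall fun k => hdmem (u k))
    have hcw : Tendsto (fun k => f (d (u k))) atTop (nhds (f t)) :=
      Filter.Tendsto.comp (hf t ht) hw
    exact le_of_tendsto hcw.norm (Eventually.of_forall fun k => hc (u k))
  -- the measurable dominating functions
  set g : ℕ → Ω → ENNReal :=
    fun n ω => (⨆ i, ENNReal.ofReal ‖X n (d i) ω‖) ^ p with hg
  have hgmeas : ∀ n, Measurable (g n) := by
    intro n
    have h1 : Measurable fun ω => ⨆ i, ENNReal.ofReal ‖X n (d i) ω‖ :=
      Measurable.iSup fun i =>
        (((hXmeas n).comp (measurable_const.prodMk measurable_id)).norm).ennreal_ofReal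
    exact (ENNReal.continuous_rpow_const.measurable).comp h1
  have hgint : ∀ n, ∫⁻ ω, g n ω ∂P ≤ C := by
    intro n
    refine le_trans (lintegral_mono_ae ?_) (hbdd n)
    filter_upwards [hσT n] with ω hσ
    have hcont := hXcontT n ω hσ
    have hbA := aux_bdd hcont
    have hsup0 : 0 ≤ ⨆ t : Set.Icc (0:ℝ) T, ‖X n (t:ℝ) ω‖ :=
      Real.iSup_nonneg fun t => norm_nonneg _
    have hle : (⨆ i, ENNReal.ofReal ‖X n (d i) ω‖)
        ≤ ENNReal.ofReal (⨆ t : Set.Icc (0:ℝ) T, ‖X n (t:ℝ) ω‖) := by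
      refine iSup_le fun i => ENNReal.ofReal_le_ofReal ?_
      exact le_ciSup hbA ⟨d i, hdmem i⟩
    calc g n ω ≤ (ENNReal.ofReal (⨆ t : Set.Icc (0:ℝ) T, ‖X n (t:ℝ) ω‖)) ^ p :=
          ENNReal.rpow_le_rpow hle hp0
      _ = ENNReal.ofReal ((⨆ t : Set.Icc (0:ℝ) T, ‖X n (t:ℝ) ω‖) ^ p) :=
          ENNReal.ofReal_rpow_of_nonneg hsup0 hp0
  -- main estimate
  have hkey : ∀ r : ℝ, 0 < r →
      P {ω | σi ω < T} ≤ C / (ENNReal.ofReal (r/2)) ^ p := by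
    intro r hr
    have hr2 : 0 < r / 2 := half_pos hr
    -- Step 1: on {σi < T}, the truncated limit process reaches norm r
    have h1 : P {ω | σi ω < T}
        ≤ P {ω | r ≤ ⨆ t : Set.Icc (0:ℝ) T, ‖Yi r (t:ℝ) ω‖} := by
      refine measure_mono_ae ?_
      filter_upwards [hai r hr] with ω hYX
      intro hlt
      have hσ0 : 0 < σi ω := (hσimem ω).1
      have hev : ∀ᶠ t in nhdsWithin (σi ω) (Set.Iio (σi ω)), t ∈ Set.Ioo 0 (σi ω) := by
        have hgt : ∀ᶠ t in nhdsWithin (σi ω) (Set.Iio (σi ω)), 0 < t :=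
          eventually_nhdsWithin_of_eventually_nhds (eventually_gt_nhds hσ0)
        have hlt' : ∀ᶠ t in nhdsWithin (σi ω) (Set.Iio (σi ω)), t < σi ω :=
          eventually_mem_nhdsWithin
        exact hgt.and hlt'
      obtain ⟨t0, ht0n, ht0⟩ := ((hexpli ω hlt r).and_eventually hev).exists
      set S : Set ℝ := {t : ℝ | t ∈ Set.Ioo 0 (σi ω) ∧ r < ‖Xi t ω‖} with hS
      have ht0S : t0 ∈ S := ⟨ht0, ht0n⟩
      have hSne : S.Nonempty := ⟨t0, ht0S⟩
      have hSbd : BddBelow S := ⟨0, fun x hx => hx.1.1.le⟩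
      have hsle : sInf S ≤ t0 := csInf_le hSbd ht0S
      have hρval : ρi r ω = sInf S := by
        rw [hρi, ← hS, csInf_union hSbd hSne bddBelow_singleton (Set.singleton_nonempty T),
          csInf_singleton]
        exact min_eq_left (le_trans hsle (le_trans ht0.2.le (hσimem ω).2))
      have hs0 : 0 ≤ sInf S := le_csInf hSne fun x hx => hx.1.1.le
      have hsσ : sInf S < σi ω := lt_of_le_of_lt hsle ht0.2
      obtain ⟨x, hxS, hx⟩ := mem_closure_iff_seq_limit.mp (csInf_mem_closure hSne hSbd)
      have hxw : Tendsto x atTop (nhdsWithin (sInf S) (Set.Ico 0 (σi ω))) :=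
        tendsto_nhdsWithin_of_tendsto_nhds_of_eventually_within _ hx
          (Eventually.of_forall fun k => ⟨(hxS k).1.1.le, (hxS k).1.2⟩)
      have hnorm : Tendsto (fun k => ‖Xi (x k) ω‖) atTop (nhds ‖Xi (sInf S) ω‖) :=
        (Filter.Tendsto.comp (hXicont ω (sInf S) ⟨hs0, hsσ⟩) hxw).norm
      have hrle : r ≤ ‖Xi (sInf S) ω‖ :=
        ge_of_tendsto hnorm (Eventually.of_forall fun k => (hxS k).2.le)
      have hYeq : Yi r (sInf S) ω = Xi (sInf S) ω :=
        hYX _ ⟨hs0, by rw [hρval]⟩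
      have hsT : sInf S ≤ T := le_trans hsσ.le (hσimem ω).2
      have : r ≤ ‖Yi r (sInf S) ω‖ := by rw [hYeq]; exact hrle
      exact le_trans this
        (le_ciSup (aux_bdd (hYicont r ω).continuousOn) ⟨sInf S, hs0, hsT⟩)
    -- Markov for the dominating functions
    have hε0 : ((ENNReal.ofReal (r/2)) ^ p : ENNReal) ≠ 0 :=
      (ENNReal.rpow_pos (ENNReal.ofReal_pos.2 hr2) ENNReal.ofReal_ne_top).ne'
    have hεT : ((ENNReal.ofReal (r/2)) ^ p : ENNReal) ≠ ⊤ :=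
      ENNReal.rpow_ne_top_of_nonneg hp0 ENNReal.ofReal_ne_top
    have hMarkov : ∀ n : ℕ, P {ω | (ENNReal.ofReal (r/2)) ^ p ≤ g n ω}
        ≤ C / (ENNReal.ofReal (r/2)) ^ p := by
      intro n
      refine le_trans (meas_ge_le_lintegral_div (hgmeas n).aemeasurable hε0 hεT) ?_
      exact ENNReal.div_le_div_right (hgint n) _
    -- Step 2: the union bound, for each n
    have h2 : ∀ n : ℕ,
        P {ω | r ≤ ⨆ t : Set.Icc (0:ℝ) T, ‖Yi r (t:ℝ) ω‖}
        ≤ P {ω | r/2 ≤ dist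
            (⨆ t : Set.Icc (0:ℝ) T, ‖Y n r (t:ℝ) ω - Yi r (t:ℝ) ω‖) 0}
          + C / (ENNReal.ofReal (r/2)) ^ p := by
      intro n
      have hincl : P {ω | r ≤ ⨆ t : Set.Icc (0:ℝ) T, ‖Yi r (t:ℝ) ω‖}
          ≤ P ({ω | r/2 ≤ dist
              (⨆ t : Set.Icc (0:ℝ) T, ‖Y n r (t:ℝ) ω - Yi r (t:ℝ) ω‖) 0}
            ∪ {ω | (ENNReal.ofReal (r/2)) ^ p ≤ g n ω}) := by
        refine measure_mono_ae ?_
        filter_upwards [hσT n, ha n r hr] with ω hσ hYX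
        intro hA
        have hA' : r ≤ ⨆ t : Set.Icc (0:ℝ) T, ‖Yi r (t:ℝ) ω‖ := hA
        by_cases hB : r/2 ≤ dist
            (⨆ t : Set.Icc (0:ℝ) T, ‖Y n r (t:ℝ) ω - Yi r (t:ℝ) ω‖) 0
        · exact Or.inl hB
        · refine Or.inr ?_
          simp only [Set.mem_setOf_eq, hg]
          refine ENNReal.rpow_le_rpow ?_ hp0
          by_contra hcon
          rw [not_le] at hcon
          have hXi : ∀ i, ‖X n (d i) ω‖ < r/2 := by
            intro i
            have h := lt_of_le_of_lt
              (le_iSup (fun i => ENNReal.ofReal ‖X n (d i) ω‖) i) hcon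
            exact (ENNReal.ofReal_lt_ofReal_iff hr2).mp h
          have hXa : ∀ t ∈ Set.Icc (0:ℝ) T, ‖X n t ω‖ ≤ r/2 :=
            hdense _ (hXcontT n ω hσ) (r/2) fun i => (hXi i).le
          have hρT : ρ n r ω = T := by
            rw [hρ]
            have hempty : {t : ℝ | t ∈ Set.Ioo 0 (σ n ω) ∧ r < ‖X n t ω‖} = ∅ := by
              refine Set.eq_empty_iff_forall_notMem.2 fun t ht => ?_
              obtain ⟨ht1, ht2⟩ := ht
              rw [hσ] at ht1
              have := hXa t ⟨ht1.1.le, ht1.2.le⟩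
              linarith
            rw [hempty, Set.empty_union, csInf_singleton]
          have hYXa : ∀ t ∈ Set.Icc (0:ℝ) T, Y n r t ω = X n t ω := by
            intro t ht
            exact hYX t (by rw [hρT]; exact ht)
          have hsupY : (⨆ t : Set.Icc (0:ℝ) T, ‖Y n r (t:ℝ) ω‖) ≤ r/2 :=
            ciSup_le fun t => by rw [hYXa t t.2]; exact hXa t t.2
          rw [not_le, Real.dist_eq, sub_zero] at hB
          have hSdlt := lt_of_le_of_lt (le_abs_self _) hB
          have hsupYi : (⨆ t : Set.Icc (0:ℝ) T, ‖Yi r (t:ℝ) ω‖)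
              ≤ (⨆ t : Set.Icc (0:ℝ) T, ‖Y n r (t:ℝ) ω‖)
                + (⨆ t : Set.Icc (0:ℝ) T, ‖Y n r (t:ℝ) ω - Yi r (t:ℝ) ω‖) := by
            refine ciSup_le fun t => ?_
            have h1 : ‖Yi r (t:ℝ) ω‖
                ≤ ‖Y n r (t:ℝ) ω‖ + ‖Y n r (t:ℝ) ω - Yi r (t:ℝ) ω‖ := by
              have h2 := norm_sub_le (Y n r (t:ℝ) ω) (Y n r (t:ℝ) ω - Yi r (t:ℝ) ω)
              rwa [sub_sub_cancel] at h2
            refine h1.trans (add_le_add ?_ ?_)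
            · exact le_ciSup (aux_bdd (hYcont n r ω).continuousOn) t
            · exact le_ciSup
                (aux_bdd (E := E) (f := fun s => Y n r s ω - Yi r s ω)
                  ((hYcont n r ω).sub (hYicont r ω)).continuousOn) t
          linarith
      refine le_trans hincl (le_trans (measure_union_le _ _) ?_)
      exact add_le_add le_rfl (hMarkov n)
    -- Take the limit n → ∞
    have h3 := tendstoInMeasure_iff_dist.mp (hb r hr) (r/2) hr2
    have h4 : Tendsto (fun n => P {ω | r/2 ≤ dist
        (⨆ t : Set.Icc (0:ℝ) T, ‖Y n r (t:ℝ) ω - Yi r (t:ℝ) ω‖) 0}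
        + C / (ENNReal.ofReal (r/2)) ^ p) atTop
        (nhds (0 + C / (ENNReal.ofReal (r/2)) ^ p)) := by
      refine Filter.Tendsto.add_const _ ?_
      exact h3
    have h5 : P {ω | σi ω < T} ≤ 0 + C / (ENNReal.ofReal (r/2)) ^ p :=
      ge_of_tendsto h4 (Eventually.of_forall fun n => le_trans h1 (h2 n))
    rwa [zero_add] at h5
  -- conclude: the measure of {σi < T} is zero
  have hnull : P {ω | σi ω < T} = 0 := by
    by_contra hne
    set δ := P {ω | σi ω < T} with hδ
    have hδT : δ ≠ ⊤ := (measure_lt_top P _).ne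
    have hδ2ne0 : δ / 2 ≠ 0 := (ENNReal.half_pos hne).ne'
    have hδ2neT : δ / 2 ≠ ⊤ := (lt_of_le_of_lt ENNReal.half_le_self
      (lt_top_iff_ne_top.2 hδT)).ne
    have hfin : C / (δ/2) ≠ ⊤ := (ENNReal.div_lt_top hC.ne hδ2ne0).ne
    set x : ℝ := (C / (δ/2)).toReal + 1 with hx
    have hx1 : (1:ℝ) ≤ x := le_add_of_nonneg_left ENNReal.toReal_nonneg
    have hxpos : (0:ℝ) < 2 * x := by linarith
    have h := hkey (2 * x) hxpos
    have hhalf : (2*x)/2 = x := by ring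
    rw [hhalf] at h
    have hxval : ENNReal.ofReal x = C/(δ/2) + 1 := by
      rw [hx, ENNReal.ofReal_add ENNReal.toReal_nonneg zero_le_one,
        ENNReal.ofReal_toReal hfin, ENNReal.ofReal_one]
    have hεb : ENNReal.ofReal x ≤ (ENNReal.ofReal x) ^ p := by
      conv_lhs => rw [← ENNReal.rpow_one (ENNReal.ofReal x)]
      exact ENNReal.rpow_le_rpow_of_exponent_le (ENNReal.one_le_ofReal.mpr hx1) hp
    have hCle : C ≤ (δ/2) * (ENNReal.ofReal x) ^ p := by
      calc C = (δ/2) * (C/(δ/2)) := (ENNReal.mul_div_cancel hδ2ne0 hδ2neT).symm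
        _ ≤ (δ/2) * (ENNReal.ofReal x) := by
            refine mul_le_mul_right ?_ _
            rw [hxval]; exact le_self_add
        _ ≤ (δ/2) * (ENNReal.ofReal x) ^ p := mul_le_mul_right hεb _
    have hfinal : C / (ENNReal.ofReal x) ^ p ≤ δ/2 := ENNReal.div_le_of_le_mul hCle
    have : δ ≤ δ/2 := le_trans h hfinal
    exact absurd this (not_le.mpr (ENNReal.half_lt_self hne hδT))
  have hae : ∀ᵐ ω ∂P, ω ∉ {ω | σi ω < T} := measure_eq_zero_iff_ae_notMem.mp hnull
  filter_upwards [hae] with ω hω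
  exact le_antisymm (hσimem ω).2 (not_lt.mp hω)
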